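/- Let n ≥ 1 with index set V = {0, 1, …, n−1}, let X ∈ ℂ^{n×n} be symmetric with X 1_0 = 0, let s ∈ ℂ^n satisfy 1^T s = 0, and let η_v ∈ ℝ be given for every v ≠ 0. Then there exist ε_0 > 0, a constant K > 0, and continuous functions δ, λ : [0, ε_0) → ℂ^n with δ(0) = 0, λ(0) = 0, ‖δ(ε)‖ ≤ K ε and ‖λ(ε)‖ ≤ K ε for all ε ∈ [0, ε_0), such that for every ε ∈ (0, ε_0) the vectors i(ε) := ε( s̄ + δ(ε) ) and u(ε) := ε^{−1} 1 + ε( X s̄ + λ(ε) ) satisfy: (a) u(ε) = X i(ε) + ε^{−1} 1; (b) 1^T i(ε) = 0; (c) u_v(ε) · conj(i_v(ε)) = s_v · |ε u_v(ε)|^{η_v} for every v ≠ 0. Equivalently, writing U_N := 1/ε, the power flow equations admit solutions i_v = s̄_v / U_N + c_v(U_N)/U_N² and u_v = U_N + [X s̄]_v / U_N + d_v(U_N)/U_N² with c_v(U_N), d_v(U_N) bounded as U_N → ∞. -/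

import Mathlib

open Matrix

section PowerFlowAux
open Real Set

lemma pow_bound {x : ℝ} (hx : x ∈ Icc (1/2 : ℝ) 2) (e : ℝ) : x ^ e ≤ 2 ^ |e| := by
  obtain ⟨h1, h2⟩ := hx
  have hx0 : (0:ℝ) < x := by linarith
  rcases le_or_gt 0 e with he | he
  · calc x ^ e ≤ 2 ^ e := Real.rpow_le_rpow hx0.le h2 he
      _ ≤ 2 ^ |e| := Real.rpow_le_rpow_of_exponent_le one_le_two (le_abs_self e)
  · have h3 : x ^ e = (x⁻¹) ^ (-e) := by
      rw [Real.rpow_neg (inv_nonneg.2 hx0.le), Real.inv_rpow hx0.le, inv_inv]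
    rw [h3, abs_of_neg he]
    exact Real.rpow_le_rpow (inv_nonneg.2 hx0.le) (by rw [inv_le_comm₀ hx0 two_pos]; linarith) (by linarith)

lemma rpow_lip (η : ℝ) : ∃ M : ℝ, 0 < M ∧
    (∀ a b : ℝ, a ∈ Icc (1/2 : ℝ) 2 → b ∈ Icc (1/2 : ℝ) 2 → |a ^ η - b ^ η| ≤ M * |a - b|) ∧
    (∀ a ∈ Icc (1/2 : ℝ) 2, a ^ η ≤ M) := by
  refine ⟨|η| * 2 ^ |η - 1| + 2 ^ |η| + 1, by positivity, fun a b ha hb => ?_, fun a ha => ?_⟩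
  · have key : ∀ x ∈ Icc (1/2 : ℝ) 2, ‖deriv (fun t : ℝ => t ^ η) x‖ ≤ |η| * 2 ^ |η - 1| := by
      intro x hx
      have hx0 : (0:ℝ) < x := by have := hx.1; linarith
      rw [Real.deriv_rpow_const x η]
      rw [norm_mul, Real.norm_eq_abs, Real.norm_eq_abs,
        abs_of_nonneg (Real.rpow_nonneg hx0.le _)]
      exact mul_le_mul_of_nonneg_left (pow_bound hx (η - 1)) (abs_nonneg η)
    have := (convex_Icc (1/2:ℝ) 2).norm_image_sub_le_of_norm_deriv_le
      (f := fun t : ℝ => t ^ η) (fun x hx => Real.differentiableAt_rpow_const_of_ne η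
        (ne_of_gt (show (0:ℝ) < x by have := hx.1; linarith))) key hb ha
    have h0 : |a ^ η - b ^ η| ≤ |η| * 2 ^ |η - 1| * |a - b| := by
      simpa [Real.norm_eq_abs] using this
    calc |a ^ η - b ^ η| ≤ |η| * 2 ^ |η - 1| * |a - b| := h0
      _ ≤ (|η| * 2 ^ |η - 1| + 2 ^ |η| + 1) * |a - b| := by
          have h1 : (0:ℝ) < 2 ^ |η| := by positivity
          have := abs_nonneg (a - b)
          nlinarith
  · have := pow_bound ha η
    have h2 : (0:ℝ) ≤ |η| * 2 ^ |η - 1| := by positivity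
    linarith

noncomputable def gaux (η : ℝ) (z : ℂ) : ℂ :=
  ((‖1 + z‖ ^ η : ℝ) : ℂ) / (1 + z) - 1

lemma gaux_zero (η : ℝ) : gaux η 0 = 0 := by
  simp [gaux]

lemma mem_Icc_abs {z : ℂ} (hz : ‖z‖ ≤ 1/2) : ‖1 + z‖ ∈ Icc (1/2 : ℝ) 2 := by
  constructor
  · have h := norm_sub_le (1 + z) z
    simp only [add_sub_cancel_right, norm_one] at h
    linarith
  · have := norm_add_le (1:ℂ) z
    simp only [norm_one] at this
    linarith

lemma one_add_ne {z : ℂ} (hz : ‖z‖ ≤ 1/2) : (1 + z) ≠ 0 := by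
  intro h
  have := (mem_Icc_abs hz).1
  rw [h] at this
  simp at this
  linarith

lemma inv_norm_le {z : ℂ} (hz : ‖z‖ ≤ 1/2) : ‖(1 + z)⁻¹‖ ≤ 2 := by
  rw [norm_inv]
  have h := (mem_Icc_abs hz).1
  rw [inv_le_comm₀ (by linarith) two_pos]
  linarith

lemma gaux_lip (η : ℝ) : ∃ L : ℝ, 0 < L ∧
    ∀ z z' : ℂ, ‖z‖ ≤ 1/2 → ‖z'‖ ≤ 1/2 →
      ‖gaux η z - gaux η z'‖ ≤ L * ‖z - z'‖ := by
  obtain ⟨M, hM, hlip, hbd⟩ := rpow_lip η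
  refine ⟨6 * M, by linarith, fun z z' hz hz' => ?_⟩
  set a := ‖1 + z‖ with ha
  set a' := ‖1 + z'‖ with ha'
  have hA : (1 + z) ≠ 0 := one_add_ne hz
  have hB : (1 + z') ≠ 0 := one_add_ne hz'
  have hmem : a ∈ Icc (1/2:ℝ) 2 := mem_Icc_abs hz
  have hmem' : a' ∈ Icc (1/2:ℝ) 2 := mem_Icc_abs hz'
  have hdiff : |a - a'| ≤ ‖z - z'‖ := by
    have := abs_norm_sub_norm_le (1 + z) (1 + z')
    simpa [add_sub_add_left_eq_sub] using this
  have key : gaux η z - gaux η z' =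
      (((a ^ η : ℝ) : ℂ) - ((a' ^ η : ℝ) : ℂ)) / (1 + z)
        + ((a' ^ η : ℝ) : ℂ) * ((1 + z') - (1 + z)) / ((1 + z) * (1 + z')) := by
    rw [gaux, gaux, ← ha, ← ha']
    field_simp
    ring
  rw [key]
  have h1 : ‖(((a ^ η : ℝ) : ℂ) - ((a' ^ η : ℝ) : ℂ)) / (1 + z)‖ ≤ (M * ‖z - z'‖) * 2 := by
    rw [div_eq_mul_inv, norm_mul]
    have e1 : ‖(((a ^ η : ℝ) : ℂ) - ((a' ^ η : ℝ) : ℂ))‖ = |a ^ η - a' ^ η| := by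
      rw [← Complex.ofReal_sub, Complex.norm_real, Real.norm_eq_abs]
    refine mul_le_mul ?_ (inv_norm_le hz) (norm_nonneg _) (by positivity)
    rw [e1]
    exact le_trans (hlip a a' hmem hmem') (mul_le_mul_of_nonneg_left hdiff hM.le)
  have h2 : ‖((a' ^ η : ℝ) : ℂ) * ((1 + z') - (1 + z)) / ((1 + z) * (1 + z'))‖
      ≤ M * ‖z - z'‖ * 4 := by
    rw [div_eq_mul_inv, norm_mul, norm_mul, mul_inv, norm_mul]
    have e2 : ‖((a' ^ η : ℝ) : ℂ)‖ ≤ M := by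
      rw [Complex.norm_real, Real.norm_eq_abs,
        abs_of_nonneg (Real.rpow_nonneg (show (0:ℝ) ≤ a' by linarith [hmem'.1]) η)]
      exact hbd a' hmem'
    have e3 : ‖(1 + z') - (1 + z)‖ = ‖z - z'‖ := by
      rw [add_sub_add_left_eq_sub, ← norm_neg]; ring_nf
    have e4 : ‖(1+z)⁻¹‖ * ‖(1+z')⁻¹‖ ≤ 4 := by
      calc ‖(1+z)⁻¹‖ * ‖(1+z')⁻¹‖ ≤ 2 * 2 :=
        mul_le_mul (inv_norm_le hz) (inv_norm_le hz') (norm_nonneg _) (by norm_num)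
        _ = 4 := by norm_num
    calc ‖((a' ^ η : ℝ) : ℂ)‖ * ‖(1 + z') - (1 + z)‖ * (‖(1+z)⁻¹‖ * ‖(1+z')⁻¹‖)
        ≤ (M * ‖z - z'‖) * 4 := by
          rw [e3]
          refine mul_le_mul ?_ e4 (by positivity) (by positivity)
          exact mul_le_mul_of_nonneg_right e2 (norm_nonneg _)
      _ = M * ‖z - z'‖ * 4 := rfl
  calc ‖_ + _‖ ≤ _ + _ := norm_add_le _ _
    _ ≤ (M * ‖z - z'‖) * 2 + M * ‖z - z'‖ * 4 := add_le_add h1 h2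
    _ = 6 * M * ‖z - z'‖ := by ring

section Aux
variable {n : ℕ}

noncomputable def CXc (X : Matrix (Fin n) (Fin n) ℂ) : ℝ := ∑ v, ∑ u, ‖X v u‖

lemma CXc_nonneg (X : Matrix (Fin n) (Fin n) ℂ) : 0 ≤ CXc X := by
  apply Finset.sum_nonneg; intro v _; apply Finset.sum_nonneg; intro u _; exact norm_nonneg _

lemma mulVec_comp_bound (X : Matrix (Fin n) (Fin n) ℂ) (y : Fin n → ℂ) (v : Fin n) :
    ‖X.mulVec y v‖ ≤ CXc X * ‖y‖ := by
  calc ‖X.mulVec y v‖ = ‖∑ u, X v u * y u‖ := by rw [Matrix.mulVec, dotProduct]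
    _ ≤ ∑ u, ‖X v u * y u‖ := norm_sum_le _ _
    _ ≤ ∑ u, ‖X v u‖ * ‖y‖ := by
        refine Finset.sum_le_sum fun u _ => ?_
        rw [norm_mul]
        exact mul_le_mul_of_nonneg_left (norm_le_pi_norm y u) (norm_nonneg _)
    _ = (∑ u, ‖X v u‖) * ‖y‖ := by rw [Finset.sum_mul]
    _ ≤ CXc X * ‖y‖ := by
        refine mul_le_mul_of_nonneg_right ?_ (norm_nonneg _)
        exact Finset.single_le_sum (f := fun v => ∑ u, ‖X v u‖)
          (fun i _ => Finset.sum_nonneg fun u _ => norm_nonneg _) (Finset.mem_univ v)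

end Aux

section Aux2
variable {n : ℕ}

noncomputable def Tmap (X : Matrix (Fin n) (Fin n) ℂ) (s : Fin n → ℂ) (η : Fin n → ℝ)
    (ε : ℝ) (δ : Fin n → ℂ) : Fin n → ℂ :=
  fun v => (starRingEnd ℂ) (s v * gaux (η v) ((ε:ℂ)^2 * X.mulVec (star s + δ) v))

noncomputable def Phi (v0 : Fin n) (X : Matrix (Fin n) (Fin n) ℂ) (s : Fin n → ℂ)
    (η : Fin n → ℝ) (ε : ℝ) (δ : Fin n → ℂ) : Fin n → ℂ :=
  fun v => if v = v0 then -∑ u ∈ Finset.univ.erase v0, Tmap X s η ε δ u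
    else Tmap X s η ε δ v

variable {X : Matrix (Fin n) (Fin n) ℂ} {s : Fin n → ℂ} {η : Fin n → ℝ}

/-- bound on the argument of gaux -/
lemma zbound {ε ε0 : ℝ} (hε : ε ∈ Icc 0 ε0) {δ : Fin n → ℂ} (hδ : ‖δ‖ ≤ 1) (v : Fin n) :
    ‖(ε:ℂ)^2 * X.mulVec (star s + δ) v‖ ≤ ε0^2 * (CXc X * (‖s‖ + 1)) := by
  rw [norm_mul, norm_pow, Complex.norm_real, Real.norm_eq_abs, sq_abs]
  have h1 : ‖X.mulVec (star s + δ) v‖ ≤ CXc X * (‖s‖ + 1) := by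
    refine le_trans (mulVec_comp_bound X _ v) ?_
    refine mul_le_mul_of_nonneg_left ?_ (CXc_nonneg X)
    calc ‖star s + δ‖ ≤ ‖star s‖ + ‖δ‖ := norm_add_le _ _
      _ ≤ ‖s‖ + 1 := by rw [norm_star]; linarith
  have h2 : ε^2 ≤ ε0^2 := by nlinarith [hε.1, hε.2]
  have h3 : (0:ℝ) ≤ CXc X * (‖s‖ + 1) := by
    have := CXc_nonneg X; have := norm_nonneg s; positivity
  exact mul_le_mul h2 h1 (norm_nonneg _) (sq_nonneg ε0)

/-- master estimate on T -/
lemma T_master {L ε0 : ℝ} (hL0 : 0 ≤ L)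
    (hLf : ∀ v : Fin n, ∀ z z' : ℂ, ‖z‖ ≤ 1/2 → ‖z'‖ ≤ 1/2 →
      ‖gaux (η v) z - gaux (η v) z'‖ ≤ L * ‖z - z'‖)
    (hball : ε0^2 * (CXc X * (‖s‖ + 1)) ≤ 1/2)
    {ε ε' : ℝ} (hε : ε ∈ Icc 0 ε0) (hε' : ε' ∈ Icc 0 ε0)
    {δ δ' : Fin n → ℂ} (hδ : ‖δ‖ ≤ 1) (hδ' : ‖δ'‖ ≤ 1) (v : Fin n) :
    ‖Tmap X s η ε δ v - Tmap X s η ε' δ' v‖ ≤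
      ‖s‖ * (L * (|ε^2 - ε'^2| * (CXc X * (‖s‖ + 1)) + ε'^2 * (CXc X * ‖δ - δ'‖))) := by
  set z := (ε:ℂ)^2 * X.mulVec (star s + δ) v with hzdef
  set z' := (ε':ℂ)^2 * X.mulVec (star s + δ') v with hzdef'
  have hz : ‖z‖ ≤ 1/2 := le_trans (zbound hε hδ v) hball
  have hz' : ‖z'‖ ≤ 1/2 := le_trans (zbound hε' hδ' v) hball
  have e0 : ‖Tmap X s η ε δ v - Tmap X s η ε' δ' v‖
      = ‖s v‖ * ‖gaux (η v) z - gaux (η v) z'‖ := by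
    simp only [Tmap]
    rw [← hzdef, ← hzdef', ← map_sub, ← mul_sub, RCLike.norm_conj, norm_mul]
  rw [e0]
  have hzz : ‖z - z'‖ ≤ |ε^2 - ε'^2| * (CXc X * (‖s‖ + 1)) + ε'^2 * (CXc X * ‖δ - δ'‖) := by
    have hsplit : z - z' = ((ε:ℂ)^2 - (ε':ℂ)^2) * X.mulVec (star s + δ) v
        + (ε':ℂ)^2 * (X.mulVec (δ - δ') v) := by
      rw [hzdef, hzdef']
      have hfun : X.mulVec (star s + δ) - X.mulVec (star s + δ') = X.mulVec (δ - δ') := by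
        rw [← Matrix.mulVec_sub]
        congr 1
        abel
      have hv : X.mulVec (star s + δ) v - X.mulVec (star s + δ') v = X.mulVec (δ - δ') v := by
        have := congrFun hfun v
        simpa using this
      rw [← hv]
      ring
    rw [hsplit]
    refine le_trans (norm_add_le _ _) (add_le_add ?_ ?_)
    · rw [norm_mul]
      have c1 : ‖(ε:ℂ)^2 - (ε':ℂ)^2‖ = |ε^2 - ε'^2| := by
        rw [show (ε:ℂ)^2 - (ε':ℂ)^2 = ((ε^2 - ε'^2 : ℝ) : ℂ) by push_cast; ring,
          Complex.norm_real, Real.norm_eq_abs]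
      rw [c1]
      refine mul_le_mul_of_nonneg_left ?_ (abs_nonneg _)
      refine le_trans (mulVec_comp_bound X _ v) ?_
      refine mul_le_mul_of_nonneg_left ?_ (CXc_nonneg X)
      calc ‖star s + δ‖ ≤ ‖star s‖ + ‖δ‖ := norm_add_le _ _
        _ ≤ ‖s‖ + 1 := by rw [norm_star]; linarith
    · rw [norm_mul]
      have c2 : ‖(ε':ℂ)^2‖ = ε'^2 := by
        rw [norm_pow, Complex.norm_real, Real.norm_eq_abs, sq_abs]
      rw [c2]
      exact mul_le_mul_of_nonneg_left (mulVec_comp_bound X _ v) (sq_nonneg ε')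
  calc ‖s v‖ * ‖gaux (η v) z - gaux (η v) z'‖ ≤ ‖s‖ * (L * ‖z - z'‖) := by
        refine mul_le_mul (norm_le_pi_norm s v) (hLf v z z' hz hz') (norm_nonneg _) (norm_nonneg _)
    _ ≤ ‖s‖ * (L * (|ε^2 - ε'^2| * (CXc X * (‖s‖ + 1)) + ε'^2 * (CXc X * ‖δ - δ'‖))) := by
        refine mul_le_mul_of_nonneg_left (mul_le_mul_of_nonneg_left hzz hL0) (norm_nonneg _)

end Aux2
section Aux3
variable {n : ℕ} {X : Matrix (Fin n) (Fin n) ℂ} {s : Fin n → ℂ} {η : Fin n → ℝ}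

lemma Phi_master {L ε0 : ℝ} (hL0 : 0 ≤ L) (v0 : Fin n)
    (hLf : ∀ v : Fin n, ∀ z z' : ℂ, ‖z‖ ≤ 1/2 → ‖z'‖ ≤ 1/2 →
      ‖gaux (η v) z - gaux (η v) z'‖ ≤ L * ‖z - z'‖)
    (hball : ε0^2 * (CXc X * (‖s‖ + 1)) ≤ 1/2)
    {ε ε' : ℝ} (hε : ε ∈ Set.Icc 0 ε0) (hε' : ε' ∈ Set.Icc 0 ε0)
    {δ δ' : Fin n → ℂ} (hδ : ‖δ‖ ≤ 1) (hδ' : ‖δ'‖ ≤ 1) :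
    ‖Phi v0 X s η ε δ - Phi v0 X s η ε' δ'‖ ≤
      n * (‖s‖ * (L * (|ε^2 - ε'^2| * (CXc X * (‖s‖ + 1)) + ε'^2 * (CXc X * ‖δ - δ'‖)))) := by
  set B := ‖s‖ * (L * (|ε^2 - ε'^2| * (CXc X * (‖s‖ + 1)) + ε'^2 * (CXc X * ‖δ - δ'‖))) with hB
  have hB0 : 0 ≤ B := by
    have h1 : (0:ℝ) ≤ CXc X := CXc_nonneg X
    have h2 : (0:ℝ) ≤ ‖s‖ := norm_nonneg s
    have h3 : (0:ℝ) ≤ ‖δ - δ'‖ := norm_nonneg _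
    have h4 : (0:ℝ) ≤ |ε^2 - ε'^2| := abs_nonneg _
    have h5 : (0:ℝ) ≤ ε'^2 := sq_nonneg _
    positivity
  have hn1 : (1:ℝ) ≤ n := by
    have : 0 < n := Fin.pos v0
    exact_mod_cast this
  have hT : ∀ v, ‖Tmap X s η ε δ v - Tmap X s η ε' δ' v‖ ≤ B :=
    fun v => T_master hL0 hLf hball hε hε' hδ hδ' v
  rw [pi_norm_le_iff_of_nonneg (by nlinarith)]
  intro v
  rw [Pi.sub_apply, Phi, Phi]
  by_cases hv : v = v0
  · rw [if_pos hv, if_pos hv]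
    rw [show -∑ u ∈ Finset.univ.erase v0, Tmap X s η ε δ u -
        -∑ u ∈ Finset.univ.erase v0, Tmap X s η ε' δ' u
        = ∑ u ∈ Finset.univ.erase v0, (Tmap X s η ε' δ' u - Tmap X s η ε δ u) by
      rw [Finset.sum_sub_distrib]; ring]
    calc ‖∑ u ∈ Finset.univ.erase v0, (Tmap X s η ε' δ' u - Tmap X s η ε δ u)‖
        ≤ ∑ u ∈ Finset.univ.erase v0, ‖Tmap X s η ε' δ' u - Tmap X s η ε δ u‖ :=
          norm_sum_le _ _
      _ ≤ ∑ _u ∈ Finset.univ.erase v0, B := by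
          refine Finset.sum_le_sum fun u _ => ?_
          rw [norm_sub_rev]
          exact hT u
      _ = (Finset.univ.erase v0).card * B := by rw [Finset.sum_const, nsmul_eq_mul]
      _ ≤ n * B := by
          refine mul_le_mul_of_nonneg_right ?_ hB0
          have : (Finset.univ.erase v0).card ≤ n := by
            calc (Finset.univ.erase v0).card ≤ (Finset.univ : Finset (Fin n)).card :=
              Finset.card_le_card (Finset.erase_subset _ _)
              _ = n := Finset.card_univ.trans (Fintype.card_fin n)
          exact_mod_cast this
  · rw [if_neg hv, if_neg hv]
    calc ‖Tmap X s η ε δ v - Tmap X s η ε' δ' v‖ ≤ B := hT v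
      _ ≤ n * B := by nlinarith

end Aux3
section Aux4
variable {n : ℕ}

lemma contractingWith_of_bound (f : (Fin n → ℂ) → (Fin n → ℂ))
    (hm : Set.MapsTo f (Metric.closedBall 0 1) (Metric.closedBall 0 1))
    (hc : ∀ x y : Fin n → ℂ, ‖x‖ ≤ 1 → ‖y‖ ≤ 1 → ‖f x - f y‖ ≤ (1/2) * ‖x - y‖) :
    ContractingWith (1/2 : NNReal) (hm.restrict f _ _) := by
  constructor
  · rw [← NNReal.coe_lt_coe]; norm_num
  · apply LipschitzWith.of_dist_le_mul
    rintro ⟨x, hx⟩ ⟨y, hy⟩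
    simp only [Subtype.dist_eq, Set.MapsTo.val_restrict_apply, dist_eq_norm]
    rw [Metric.mem_closedBall, dist_zero_right] at hx hy
    have hcc : ((1/2 : NNReal) : ℝ) = 1/2 := by norm_num
    rw [hcc]
    exact hc x y hx hy

end Aux4

end PowerFlowAux

set_option maxHeartbeats 2000000 in
/-- Taylor-type expansion of the power flow solutions for large nominal
voltage `U_N = 1/ε`: there are continuous, `O(ε)` correction terms `δ, λ` such that the currents
`i(ε) = ε(s̄ + δ(ε))` and voltages `u(ε) = ε⁻¹ 1 + ε (X s̄ + λ(ε))` solve the power flow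
equations. -/
theorem power_flow_taylor_expansion (n : ℕ) (hn : 1 ≤ n) (v0 : Fin n)
    (X : Matrix (Fin n) (Fin n) ℂ) (hXsym : Xᵀ = X)
    (hX0 : X.mulVec (Pi.single v0 1) = 0)
    (s : Fin n → ℂ) (hs : ∑ v, s v = 0) (η : Fin n → ℝ) :
    ∃ ε0 > (0 : ℝ), ∃ K > (0 : ℝ), ∃ δ lam : ℝ → (Fin n → ℂ),
      ContinuousOn δ (Set.Ico 0 ε0) ∧ ContinuousOn lam (Set.Ico 0 ε0) ∧
      δ 0 = 0 ∧ lam 0 = 0 ∧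
      (∀ ε ∈ Set.Ico (0 : ℝ) ε0, ‖δ ε‖ ≤ K * ε ∧ ‖lam ε‖ ≤ K * ε) ∧
      (∀ ε ∈ Set.Ioo (0 : ℝ) ε0,
        let i : Fin n → ℂ := (ε : ℂ) • (star s + δ ε)
        let u : Fin n → ℂ :=
          (ε : ℂ)⁻¹ • (fun _ => (1 : ℂ)) + (ε : ℂ) • (X.mulVec (star s) + lam ε)
        -- (a)  u = X i + ε⁻¹ 1
        (u = X.mulVec i + (ε : ℂ)⁻¹ • fun _ => (1 : ℂ)) ∧
        -- (b)  1ᵀ i = 0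
        (∑ v, i v = 0) ∧
        -- (c)  u_v conj(i_v) = s_v |ε u_v|^{η_v}  for all v ≠ 0
        (∀ v : Fin n, v ≠ v0 →
          u v * star (i v) = s v * ((‖(ε : ℂ) * u v‖ ^ η v : ℝ) : ℂ))) := by
  classical
  choose Lf hLf using fun v => gaux_lip (η v)
  obtain ⟨L, hLdef⟩ : ∃ L : ℝ, L = (∑ v, Lf v) + 1 := ⟨_, rfl⟩
  have hLsum0 : 0 ≤ ∑ v, Lf v := Finset.sum_nonneg fun v _ => (hLf v).1.le
  have hLpos : 0 < L := by rw [hLdef]; linarith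
  have hLf' : ∀ v : Fin n, ∀ z z' : ℂ, ‖z‖ ≤ 1/2 → ‖z'‖ ≤ 1/2 →
      ‖gaux (η v) z - gaux (η v) z'‖ ≤ L * ‖z - z'‖ := by
    intro v z z' hz hz'
    refine le_trans ((hLf v).2 z z' hz hz') (mul_le_mul_of_nonneg_right ?_ (norm_nonneg _))
    have h1 : Lf v ≤ ∑ u, Lf u :=
      Finset.single_le_sum (fun u _ => (hLf u).1.le) (Finset.mem_univ v)
    rw [hLdef]; linarith
  obtain ⟨W, hWdef⟩ : ∃ W : ℝ, W = CXc X * (‖s‖ + 1) := ⟨_, rfl⟩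
  have hCX0 : 0 ≤ CXc X := CXc_nonneg X
  have hs0 : (0:ℝ) ≤ ‖s‖ := norm_nonneg s
  have hW0 : 0 ≤ W := by rw [hWdef]; positivity
  obtain ⟨Q, hQdef⟩ : ∃ Q : ℝ, Q = n * (‖s‖ * L) := ⟨_, rfl⟩
  have hQ0 : 0 ≤ Q := by rw [hQdef]; positivity
  obtain ⟨R, hRdef⟩ : ∃ R : ℝ, R = Q * W + Q * CXc X + W + 1 := ⟨_, rfl⟩
  have hR1 : 1 ≤ R := by rw [hRdef]; nlinarith
  have hRpos : 0 < R := by linarith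
  obtain ⟨ε0, hε0def⟩ : ∃ ε0 : ℝ, ε0 = min 1 (1 / (2 * R)) := ⟨_, rfl⟩
  have hε0pos : 0 < ε0 := by
    rw [hε0def]; apply lt_min one_pos; positivity
  have hε0le1 : ε0 ≤ 1 := by rw [hε0def]; exact min_le_left _ _
  have hε0R : ε0 ≤ 1 / (2 * R) := by rw [hε0def]; exact min_le_right _ _
  have hsq : ε0 ^ 2 * R ≤ 1/2 := by
    have h1 : ε0 ^ 2 ≤ 1 / (2 * R) := by nlinarith
    calc ε0 ^ 2 * R ≤ (1 / (2 * R)) * R := mul_le_mul_of_nonneg_right h1 hRpos.le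
      _ = 1/2 := by field_simp
  have hball : ε0 ^ 2 * (CXc X * (‖s‖ + 1)) ≤ 1/2 := by
    rw [← hWdef]
    have : ε0 ^ 2 * W ≤ ε0 ^ 2 * R := by
      refine mul_le_mul_of_nonneg_left ?_ (sq_nonneg _)
      rw [hRdef]; nlinarith
    exact le_trans this hsq
  have h0Icc : (0:ℝ) ∈ Set.Icc 0 ε0 := ⟨le_refl 0, hε0pos.le⟩
  -- the complete ball
  have hcomp : IsComplete (Metric.closedBall (0 : Fin n → ℂ) 1) :=
    Metric.isClosed_closedBall.isComplete
  -- Φ maps ball to ball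
  have hPhi0 : ∀ δ : Fin n → ℂ, Phi v0 X s η 0 δ = 0 := by
    intro δ
    funext v
    simp [Phi, Tmap, gaux_zero]
  have hQW : ∀ ε ∈ Set.Icc (0:ℝ) ε0, ∀ δ : Fin n → ℂ, ‖δ‖ ≤ 1 →
      ‖Phi v0 X s η ε δ‖ ≤ Q * W * ε ^ 2 := by
    intro ε hε δ hδ
    have h := Phi_master hLpos.le v0 hLf' hball hε h0Icc hδ hδ
    rw [hPhi0 δ, sub_zero, sub_self, norm_zero] at h
    have hε2 : |ε ^ 2 - 0 ^ 2| = ε ^ 2 := by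
      simp [abs_of_nonneg (sq_nonneg ε)]
    rw [hε2] at h
    calc ‖Phi v0 X s η ε δ‖
        ≤ n * (‖s‖ * (L * (ε ^ 2 * (CXc X * (‖s‖ + 1)) + 0 ^ 2 * (CXc X * 0)))) := h
      _ = Q * W * ε ^ 2 := by rw [hQdef, hWdef]; ring
  have hmaps : ∀ ε ∈ Set.Icc (0:ℝ) ε0, Set.MapsTo (Phi v0 X s η ε)
      (Metric.closedBall (0 : Fin n → ℂ) 1) (Metric.closedBall (0 : Fin n → ℂ) 1) := by
    intro ε hε δ hδ
    rw [Metric.mem_closedBall, dist_zero_right] at *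
    have h1 := hQW ε hε δ hδ
    have h2 : ε ^ 2 ≤ ε0 ^ 2 := by nlinarith [hε.1, hε.2]
    have h3 : Q * W ≤ R := by rw [hRdef]; nlinarith
    nlinarith [sq_nonneg ε]
  -- contraction
  have hcontr : ∀ ε, ∀ h : ε ∈ Set.Icc (0:ℝ) ε0, ContractingWith (1/2 : NNReal)
      ((hmaps ε h).restrict (Phi v0 X s η ε) _ _) := by
    intro ε hε
    refine contractingWith_of_bound _ (hmaps ε hε) ?_
    intro x y hx hy
    have h := Phi_master hLpos.le v0 hLf' hball hε hε hx hy
    rw [sub_self, abs_zero] at h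
    have h2 : ε ^ 2 ≤ ε0 ^ 2 := by nlinarith [hε.1, hε.2]
    have h3 : Q * CXc X ≤ R := by rw [hRdef]; nlinarith
    have h4 : (n : ℝ) * (‖s‖ * (L * (0 * (CXc X * (‖s‖ + 1)) + ε ^ 2 * (CXc X * ‖x - y‖))))
        = (Q * CXc X * ε ^ 2) * ‖x - y‖ := by rw [hQdef]; ring
    rw [h4] at h
    have h5 : (Q * CXc X * ε ^ 2) * ‖x - y‖ ≤ (1/2) * ‖x - y‖ := by
      refine mul_le_mul_of_nonneg_right ?_ (norm_nonneg _)
      nlinarith [mul_nonneg hQ0 hCX0, sq_nonneg ε]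
    linarith
  have h0mem : (0 : Fin n → ℂ) ∈ Metric.closedBall (0 : Fin n → ℂ) 1 := by
    simp [Metric.mem_closedBall]
  obtain ⟨d, hddef⟩ : ∃ d : ℝ → Fin n → ℂ, d = fun ε =>
      if h : ε ∈ Set.Icc (0:ℝ) ε0 then
        ContractingWith.efixedPoint' (Phi v0 X s η ε) hcomp (hmaps ε h) (hcontr ε h)
          0 h0mem (edist_ne_top _ _)
      else 0 := ⟨_, rfl⟩
  have hdmem : ∀ ε, ∀ h : ε ∈ Set.Icc (0:ℝ) ε0, ‖d ε‖ ≤ 1 := by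
    intro ε h
    rw [hddef]
    simp only [dif_pos h]
    have := ContractingWith.efixedPoint_mem' hcomp (hmaps ε h) (hcontr ε h) h0mem
      (edist_ne_top _ _)
    rwa [Metric.mem_closedBall, dist_zero_right] at this
  have hdfix : ∀ ε, ∀ h : ε ∈ Set.Icc (0:ℝ) ε0, Phi v0 X s η ε (d ε) = d ε := by
    intro ε h
    conv_rhs => rw [hddef]
    simp only [dif_pos h]
    have := ContractingWith.efixedPoint_isFixedPt' hcomp (hmaps ε h) (hcontr ε h) h0mem
      (edist_ne_top _ _)
    rw [hddef]
    simp only [dif_pos h]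
    exact this
  have hdbound : ∀ ε, ∀ h : ε ∈ Set.Icc (0:ℝ) ε0, ‖d ε‖ ≤ Q * W * ε ^ 2 := by
    intro ε h
    rw [← hdfix ε h]
    exact hQW ε h (d ε) (hdmem ε h)
  have hd0 : d 0 = 0 := by
    have := hdbound 0 h0Icc
    simp only [ne_eq, OfNat.ofNat_ne_zero, not_false_eq_true, zero_pow, mul_zero] at this
    exact norm_le_zero_iff.1 this
  clear hddef
  clear hcontr hmaps hQW hPhi0 hcomp h0mem
  have hdlip : ∀ ε, ∀ hε : ε ∈ Set.Icc (0:ℝ) ε0, ∀ ε', ∀ hε' : ε' ∈ Set.Icc (0:ℝ) ε0,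
      ‖d ε - d ε'‖ ≤ (4 * (Q * W)) * |ε - ε'| := by
    intro ε hε ε' hε'
    have h := Phi_master hLpos.le v0 hLf' hball hε hε' (hdmem ε hε) (hdmem ε' hε')
    rw [hdfix ε hε, hdfix ε' hε'] at h
    have habs : |ε ^ 2 - ε' ^ 2| ≤ 2 * |ε - ε'| := by
      have : ε ^ 2 - ε' ^ 2 = (ε + ε') * (ε - ε') := by ring
      rw [this, abs_mul]
      have h1 : |ε + ε'| ≤ 2 := by
        rw [abs_of_nonneg (by linarith [hε.1, hε'.1])]
        linarith [hε.2, hε'.2, hε0le1]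
      exact mul_le_mul_of_nonneg_right h1 (abs_nonneg _)
    have hhalf : Q * CXc X * ε' ^ 2 ≤ 1/2 := by
      have h2 : ε' ^ 2 ≤ ε0 ^ 2 := by nlinarith [hε'.1, hε'.2]
      have h3 : Q * CXc X ≤ R := by rw [hRdef]; nlinarith
      nlinarith [mul_nonneg hQ0 hCX0, sq_nonneg ε']
    have hexp : n * (‖s‖ * (L * (|ε ^ 2 - ε' ^ 2| * (CXc X * (‖s‖ + 1))
        + ε' ^ 2 * (CXc X * ‖d ε - d ε'‖))))
        = Q * W * |ε ^ 2 - ε' ^ 2| + Q * CXc X * ε' ^ 2 * ‖d ε - d ε'‖ := by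
      rw [hQdef, hWdef]; ring
    rw [hexp] at h
    have hQW0 : 0 ≤ Q * W := mul_nonneg hQ0 hW0
    nlinarith [norm_nonneg (d ε - d ε'), abs_nonneg (ε - ε'),
      mul_le_mul_of_nonneg_left habs hQW0,
      mul_le_mul_of_nonneg_right hhalf (norm_nonneg (d ε - d ε'))]
  -- continuity
  have hdcont : ContinuousOn d (Set.Icc 0 ε0) := by
    have hlip : LipschitzOnWith (Real.toNNReal (4 * (Q * W))) d (Set.Icc 0 ε0) := by
      rw [lipschitzOnWith_iff_dist_le_mul]
      intro x hx y hy
      rw [dist_eq_norm, Real.dist_eq]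
      rw [Real.coe_toNNReal _ (by positivity)]
      exact hdlip x hx y hy
    exact hlip.continuousOn
  have hmvnorm : ∀ y : Fin n → ℂ, ‖X.mulVec y‖ ≤ CXc X * ‖y‖ := by
    intro y
    rw [pi_norm_le_iff_of_nonneg (by positivity)]
    exact mulVec_comp_bound X y
  have hlamcont : ContinuousOn (fun ε => X.mulVec (d ε)) (Set.Icc 0 ε0) := by
    have hXc : Continuous (fun y : Fin n → ℂ => X.mulVec y) := by
      have := LinearMap.continuous_of_finiteDimensional (X.mulVecLin)
      exact this
    exact hXc.comp_continuousOn hdcont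
  obtain ⟨K, hKdef⟩ : ∃ K : ℝ, K = (CXc X + 1) * (Q * W * ε0) + 1 := ⟨_, rfl⟩
  have hKpos : 0 < K := by
    rw [hKdef]
    nlinarith [mul_nonneg (mul_nonneg hQ0 hW0) hε0pos.le]
  refine ⟨ε0, hε0pos, K, hKpos, d, fun ε => X.mulVec (d ε),
    hdcont.mono Set.Ico_subset_Icc_self, hlamcont.mono Set.Ico_subset_Icc_self,
    hd0, by show X.mulVec (d 0) = 0; rw [hd0, Matrix.mulVec_zero], ?_, ?_⟩
  · -- bounds
    intro ε hε
    have hIcc : ε ∈ Set.Icc 0 ε0 := ⟨hε.1, hε.2.le⟩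
    have h1 : ‖d ε‖ ≤ Q * W * ε ^ 2 := hdbound ε hIcc
    have h2 : Q * W * ε ^ 2 ≤ Q * W * ε0 * ε := by
      nlinarith [mul_nonneg (mul_nonneg (mul_nonneg hQ0 hW0) (sub_nonneg.2 hIcc.2)) hIcc.1]
    have hQWε0 : 0 ≤ Q * W * ε0 := by positivity
    constructor
    · have : Q * W * ε0 * ε ≤ K * ε := by
        refine mul_le_mul_of_nonneg_right ?_ hIcc.1
        rw [hKdef]; nlinarith
      linarith
    · have h3 : ‖X.mulVec (d ε)‖ ≤ CXc X * ‖d ε‖ := hmvnorm (d ε)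
      have h4 : CXc X * ‖d ε‖ ≤ CXc X * (Q * W * ε0 * ε) := by
        refine mul_le_mul_of_nonneg_left ?_ hCX0
        linarith
      have h5 : CXc X * (Q * W * ε0 * ε) ≤ K * ε := by
        have : CXc X * (Q * W * ε0) ≤ K := by rw [hKdef]; nlinarith
        nlinarith [hIcc.1]
      linarith
  · -- the equations
    intro ε hε
    have hIcc : ε ∈ Set.Icc 0 ε0 := ⟨hε.1.le, hε.2.le⟩
    have hεpos : 0 < ε := hε.1
    have hεne : (ε:ℂ) ≠ 0 := by
      simp only [ne_eq, Complex.ofReal_eq_zero]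
      exact ne_of_gt hεpos
    refine ⟨?_, ?_, ?_⟩
    · -- (a)
      show (ε : ℂ)⁻¹ • (fun _ => (1:ℂ)) + (ε : ℂ) • (X.mulVec (star s) + X.mulVec (d ε))
        = X.mulVec ((ε : ℂ) • (star s + d ε)) + (ε : ℂ)⁻¹ • fun _ => (1:ℂ)
      rw [Matrix.mulVec_smul, Matrix.mulVec_add]
      abel
    · -- (b)
      show ∑ v, ((ε : ℂ) • (star s + d ε)) v = 0
      have hsumPhi : ∑ v, Phi v0 X s η ε (d ε) v = 0 := by
        rw [← Finset.add_sum_erase Finset.univ _ (Finset.mem_univ v0)]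
        have e1 : Phi v0 X s η ε (d ε) v0
            = -∑ u ∈ Finset.univ.erase v0, Tmap X s η ε (d ε) u := by
          simp [Phi]
        have e2 : ∀ u ∈ Finset.univ.erase v0,
            Phi v0 X s η ε (d ε) u = Tmap X s η ε (d ε) u := by
          intro u hu
          simp only [Phi, if_neg (Finset.ne_of_mem_erase hu)]
        rw [e1, Finset.sum_congr rfl e2]
        exact neg_add_cancel _
      have hsumd : ∑ v, d ε v = 0 := by
        rw [← hdfix ε hIcc]
        exact hsumPhi
      simp only [Pi.smul_apply, Pi.add_apply, Pi.star_apply, smul_eq_mul]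
      rw [← Finset.mul_sum, Finset.sum_add_distrib, hsumd, add_zero, ← star_sum, hs,
        star_zero, mul_zero]
    · -- (c)
      intro v hv
      obtain ⟨z, hzdef⟩ : ∃ z : ℂ, z = (ε:ℂ)^2 * X.mulVec (star s + d ε) v := ⟨_, rfl⟩
      have hznorm : ‖z‖ ≤ 1/2 := by
        rw [hzdef]
        exact le_trans (zbound hIcc (hdmem ε hIcc) v) hball
      have h1z : (1 + z) ≠ 0 := one_add_ne hznorm
      have hdv : d ε v = (starRingEnd ℂ) (s v * gaux (η v) z) := by
        conv_lhs => rw [← hdfix ε hIcc]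
        simp only [Phi, Tmap, if_neg hv]
        rw [← hzdef]
      have hstar : star (d ε v) = s v * gaux (η v) z := by
        rw [hdv]
        simp
      have hu : (((ε : ℂ)⁻¹ • (fun _ => (1:ℂ)) + (ε : ℂ) • (X.mulVec (star s)
          + X.mulVec (d ε)) : Fin n → ℂ)) v
          = (ε:ℂ)⁻¹ + (ε:ℂ) * X.mulVec (star s + d ε) v := by
        simp only [Pi.add_apply, Pi.smul_apply, smul_eq_mul, mul_one, Matrix.mulVec_add]
      have hεu : (ε:ℂ) * ((ε:ℂ)⁻¹ + (ε:ℂ) * X.mulVec (star s + d ε) v) = 1 + z := by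
        rw [hzdef]
        field_simp
      have hi : star (((ε : ℂ) • (star s + d ε)) v)
          = (ε:ℂ) * (s v + s v * gaux (η v) z) := by
        simp only [Pi.smul_apply, Pi.add_apply, Pi.star_apply, smul_eq_mul, star_mul',
          star_add, star_star]
        rw [hstar, show star ((ε:ℂ)) = (ε:ℂ) from by
          rw [Complex.star_def, Complex.conj_ofReal]]
      have hgx : s v + s v * gaux (η v) z
          = s v * ((‖1+z‖ ^ (η v) : ℝ) : ℂ) / (1 + z) := by
        rw [gaux]
        field_simp
        ring
      rw [hu, hi, hgx]
      have key : ((ε:ℂ)⁻¹ + (ε:ℂ) * X.mulVec (star s + d ε) v)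
          * ((ε:ℂ) * (s v * ((‖1+z‖ ^ (η v) : ℝ) : ℂ) / (1 + z)))
          = s v * ((‖1+z‖ ^ (η v) : ℝ) : ℂ)
            * (((ε:ℂ) * ((ε:ℂ)⁻¹ + (ε:ℂ) * X.mulVec (star s + d ε) v)) / (1 + z)) := by
        ring
      rw [key, hεu, div_self h1z, mul_one]
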